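/- Let π ∈ S_{r+s+t}, and define π_⃗n ∈ S_n as the merging of the consecutive cycles T₁,…,T_{r+s+t} of γ (of lengths n₁,…,n_{r+s+t}) along the cycles of π. Let σ ∈ S_n be such that σ⁻¹π_⃗n separates the points of N = {n₁, n₁+n₂, …, n}. Then the restriction of σ⁻¹γ_{p,q,l} to N is equal to the restriction of π_⃗n⁻¹γ_{p,q,l} to N; consequently σ⁻¹γ_{p,q,l} separates N if and only if π = γ_{r,s,t}. -/

import Mathlib

open Equiv

namespace ThirdOrderFree

variable {α : Type*}

/-- The setoid whose classes are the cycles (orbits) of a permutation. -/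
def sameCycleSetoid (σ : Perm α) : Setoid α :=
  ⟨σ.SameCycle,
    ⟨fun x => Equiv.Perm.SameCycle.refl σ x, fun h => h.symm, fun h h' => h.trans h'⟩⟩

/-- Number of cycles (orbits, including fixed points) of a permutation. -/
noncomputable def numCycles (σ : Perm α) : ℕ :=
  Nat.card (Quotient (sameCycleSetoid σ))

/-- The length `|σ| = n - #(σ)`. -/
noncomputable def len (σ : Perm α) : ℕ :=
  Nat.card α - numCycles σ

/-- Join of the cycle partitions of two permutations. -/
def joinSetoid (π σ : Perm α) : Setoid α :=
  sameCycleSetoid π ⊔ sameCycleSetoid σ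

/-- Number of blocks of `π ∨ σ`. -/
noncomputable def numBlocks (π σ : Perm α) : ℕ :=
  Nat.card (Quotient (joinSetoid π σ))

/-- `π ∨ σ` is the one-block partition. -/
def JoinTop (π σ : Perm α) : Prop :=
  ∀ x y : α, (joinSetoid π σ).r x y

/-- `π` is a non-crossing (annular) permutation with respect to `γ`. -/
def SNC (γ π : Perm α) : Prop :=
  JoinTop π γ ∧
    numCycles π + numCycles (π⁻¹ * γ) + numCycles γ = Nat.card α + 2

/-- `τ` separates the points of `N`: no cycle of `τ` contains two distinct points of `N`. -/
def Separates (τ : Perm α) (N : Set α) : Prop :=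
  ∀ x ∈ N, ∀ y ∈ N, τ.SameCycle x y → x = y

/-- The first-return map of `σ` on the set `{x | p x}`. -/
noncomputable def firstReturn (σ : Perm α) (p : α → Prop) (x : α) : α :=
  (σ ^ sInf {k : ℕ | 0 < k ∧ p ((σ ^ k) x)}) x

open Classical in
/-- The restriction of `σ` to `{x | p x}`: the unique permutation agreeing with the
first-return map (it exists whenever `α` is finite). -/
noncomputable def restrictPerm (σ : Perm α) (p : α → Prop) : Perm {x // p x} :=
  if h : ∃ e : Perm {x // p x}, ∀ x : {x // p x}, (e x : α) = firstReturn σ p (x : α)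
  then h.choose else 1

/-- `π ≤ σ` : each cycle of `π` is contained in a cycle of `σ` and on each cycle of
`σ` the restriction of `π` is a non-crossing permutation of that cycle. -/
def le' (π σ : Perm α) : Prop :=
  (∀ x y : α, π.SameCycle x y → σ.SameCycle x y) ∧
  ∀ x : α,
    numCycles (restrictPerm π (σ.SameCycle x)) +
      numCycles ((restrictPerm π (σ.SameCycle x))⁻¹ * restrictPerm σ (σ.SameCycle x)) =
      Nat.card {y // σ.SameCycle x y} + 1

/-- `π ≲ σ` : on each block of `π ∨ σ`, `π` is annular non-crossing w.r.t. `σ`. -/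
def ncRel (π σ : Perm α) : Prop :=
  ∀ x : α,
    SNC (restrictPerm σ ((joinSetoid π σ).r x)) (restrictPerm π ((joinSetoid π σ).r x))

/-- The permutation of `Σ i, Fin (n i)` rotating each block: the product of the
directed cycles `T i` of lengths `n i`. -/
def blockRotate {ι : Type*} (n : ι → ℕ) : Perm ((i : ι) × Fin (n i)) :=
  Equiv.sigmaCongrRight fun i => finRotate (n i)

/-- The first elements of the blocks. -/
def zeroSection {ι : Type*} (n : ι → ℕ) (hn : ∀ i, 0 < n i) :
    ι ≃ {x : (i : ι) × Fin (n i) // x.2.val = 0} where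
  toFun i := ⟨⟨i, ⟨0, hn i⟩⟩, rfl⟩
  invFun x := x.1.1
  left_inv i := rfl
  right_inv := fun x => by
    obtain ⟨⟨i, j⟩, hj⟩ := x
    exact Subtype.ext (congrArg (Sigma.mk i) (Fin.ext hj.symm))

/-- `π_{\vec n}` : merge the blocks `T i` along the cycles of `π`; within a block it
moves forward, and the last element of block `i` is sent to the first element of
block `π i`. -/
def mergePerm {ι : Type*} (n : ι → ℕ) (hn : ∀ i, 0 < n i) (π : Perm ι) :
    Perm ((i : ι) × Fin (n i)) :=
  (π.extendDomain (zeroSection n hn)) * blockRotate n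



section Helpers

lemma returnSet_nonempty [Finite α] (σ : Perm α) {p : α → Prop} {x : α} (hx : p x) :
    {k : ℕ | 0 < k ∧ p ((σ ^ k) x)}.Nonempty :=
  ⟨orderOf σ, orderOf_pos σ, by simp [pow_orderOf_eq_one, hx]⟩

lemma restrictPerm_eq_of_spec {σ : Perm α} {p : α → Prop} (e : Perm {x // p x})
    (he : ∀ x : {x // p x}, (e x : α) = firstReturn σ p (x : α)) :
    restrictPerm σ p = e := by
  have h : ∃ e : Perm {x // p x}, ∀ x : {x // p x}, (e x : α) = firstReturn σ p (x : α) := ⟨e, he⟩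
  rw [restrictPerm, dif_pos h]
  ext x
  exact congrArg Subtype.val (Subtype.ext ((h.choose_spec x).trans (he x).symm))

lemma firstReturn_eq_of_separates [Finite α] {τ : Perm α} {N : Set α}
    (hsep : Separates τ N) {x : α} (hx : x ∈ N) : firstReturn τ (· ∈ N) x = x := by
  have hne := returnSet_nonempty τ (p := (· ∈ N)) hx
  set k₀ := sInf {k : ℕ | 0 < k ∧ (fun z => z ∈ N) ((τ ^ k) x)} with hk
  have hmem := Nat.sInf_mem hne
  have hfr : firstReturn τ (· ∈ N) x = (τ ^ k₀) x := rfl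
  rw [hfr]
  exact (hsep x hx _ hmem.2 ⟨(k₀ : ℤ), by rw [zpow_natCast]⟩).symm

lemma restrictPerm_eq_one_of_separates [Finite α] {τ : Perm α} {N : Set α}
    (hsep : Separates τ N) : restrictPerm τ (· ∈ N) = 1 :=
  restrictPerm_eq_of_spec 1 fun x => by
    simpa using (firstReturn_eq_of_separates hsep x.2).symm

lemma firstReturn_mul [Finite α] {a b : Perm α} {N : Set α}
    (ha : Separates a N) (hbN : ∀ x ∈ N, b x ∈ N) (hbc : ∀ x ∉ N, b x = x)
    {x : α} (hx : x ∈ N) : firstReturn (a * b) (· ∈ N) x = b x := by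
  set y := b x with hy
  have hyN : y ∈ N := hbN x hx
  have hne := returnSet_nonempty a (p := (· ∈ N)) hyN
  set k₀ := sInf {k : ℕ | 0 < k ∧ (fun z => z ∈ N) ((a ^ k) y)} with hk₀
  have hmem := Nat.sInf_mem hne
  have hfix : (a ^ k₀) y = y :=
    (ha y hyN _ hmem.2 ⟨(k₀ : ℤ), by rw [zpow_natCast]⟩).symm
  have key : ∀ j, 0 < j → j ≤ k₀ → ((a * b) ^ j) x = (a ^ j) y := by
    intro j hj hjk
    induction j with
    | zero => omega
    | succ j ih =>
      rcases Nat.eq_zero_or_pos j with hj0 | hj0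
      · subst hj0; simp [Equiv.Perm.mul_apply, ← hy]
      · have hlt : j < k₀ := by omega
        have hnot : (a ^ j) y ∉ N := by
          intro hmem'
          have hle : k₀ ≤ j := hk₀ ▸ Nat.sInf_le
            (show j ∈ {k : ℕ | 0 < k ∧ (fun z => z ∈ N) ((a ^ k) y)} from ⟨hj0, hmem'⟩)
          omega
        have hih := ih hj0 (by omega)
        calc ((a * b) ^ (j + 1)) x = (a * b) (((a * b) ^ j) x) := by
              rw [pow_succ']; rfl
          _ = a (b ((a ^ j) y)) := by rw [hih, Equiv.Perm.mul_apply]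
          _ = (a ^ (j + 1)) y := by rw [hbc _ hnot, pow_succ']; rfl
  have hmemS' : k₀ ∈ {k : ℕ | 0 < k ∧ (fun z => z ∈ N) (((a * b) ^ k) x)} := by
    refine ⟨hmem.1, ?_⟩
    show ((a * b) ^ k₀) x ∈ N
    rw [key k₀ hmem.1 le_rfl, hfix]; exact hyN
  set m := sInf {k : ℕ | 0 < k ∧ (fun z => z ∈ N) (((a * b) ^ k) x)} with hm
  have hinf : m = k₀ := by
    refine le_antisymm (Nat.sInf_le hmemS') ?_
    by_contra hlt
    push_neg at hlt
    have hmem2 := Nat.sInf_mem (⟨k₀, hmemS'⟩ :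
      {k : ℕ | 0 < k ∧ (fun z => z ∈ N) (((a * b) ^ k) x)}.Nonempty)
    rw [← hm] at hmem2
    have h3 := key m hmem2.1 (le_of_lt hlt)
    have hmN : (a ^ m) y ∈ N := h3 ▸ hmem2.2
    have hle : k₀ ≤ m := hk₀ ▸ Nat.sInf_le
      (show m ∈ {k : ℕ | 0 < k ∧ (fun z => z ∈ N) ((a ^ k) y)} from ⟨hmem2.1, hmN⟩)
    omega
  have hfr : firstReturn (a * b) (· ∈ N) x = ((a * b) ^ m) x := rfl
  rw [hfr, hinf, key k₀ hmem.1 le_rfl, hfix]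

lemma restrictPerm_mul [Finite α] {a b : Perm α} {N : Set α}
    (ha : Separates a N) (hbN : ∀ x ∈ N, b x ∈ N) (hbc : ∀ x ∉ N, b x = x) :
    restrictPerm (a * b) (· ∈ N) =
      b.subtypePerm (fun x => Iff.symm ⟨fun h => hbN x h,
        fun h => by by_contra hn; rw [hbc x hn] at h; exact hn h⟩) :=
  restrictPerm_eq_of_spec _ fun x => by
    simpa [Equiv.Perm.subtypePerm_apply] using (firstReturn_mul ha hbN hbc x.2).symm

lemma finRotate_val {m : ℕ} (j : Fin m) : (finRotate m j).val = (j.val + 1) % m := by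
  rcases m with _ | m
  · exact j.elim0
  · rw [finRotate_succ_apply]
    simp [Fin.add_def, Nat.add_mod]

lemma blockRotate_apply {ι : Type*} (n : ι → ℕ) (x : (i : ι) × Fin (n i)) :
    blockRotate n x = ⟨x.1, finRotate (n x.1) x.2⟩ := by
  obtain ⟨i, j⟩ := x; rfl

lemma conj_apply_mem {ι : Type*} (n : ι → ℕ) (hn : ∀ i, 0 < n i) (ρ : Perm ι)
    (x : (i : ι) × Fin (n i)) (hx : x.2.val = n x.1 - 1) :
    ((blockRotate n)⁻¹ * ρ.extendDomain (zeroSection n hn) * blockRotate n) x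
      = ⟨ρ x.1, ⟨n (ρ x.1) - 1, Nat.sub_lt (hn _) one_pos⟩⟩ := by
  have h1 : blockRotate n x = ((zeroSection n hn) x.1 : (i : ι) × Fin (n i)) := by
    rw [blockRotate_apply]
    refine congrArg (Sigma.mk x.1) (Fin.ext ?_)
    rw [finRotate_val]
    have h2 := x.2.isLt
    have h3 : x.2.val + 1 = n x.1 := by omega
    rw [h3, Nat.mod_self]
  have h4 : blockRotate n (⟨ρ x.1, ⟨n (ρ x.1) - 1, Nat.sub_lt (hn _) one_pos⟩⟩ :
      (i : ι) × Fin (n i)) = ((zeroSection n hn) (ρ x.1) : (i : ι) × Fin (n i)) := by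
    rw [blockRotate_apply]
    refine congrArg (Sigma.mk (ρ x.1)) (Fin.ext ?_)
    rw [finRotate_val]
    have h2 := hn (ρ x.1)
    have h3 : n (ρ x.1) - 1 + 1 = n (ρ x.1) := by omega
    show (n (ρ x.1) - 1 + 1) % n (ρ x.1) = 0
    rw [h3, Nat.mod_self]
  rw [Perm.mul_apply, Perm.mul_apply, h1, Perm.extendDomain_apply_image,
    Perm.inv_eq_iff_eq, h4]

lemma conj_apply_not_mem {ι : Type*} (n : ι → ℕ) (hn : ∀ i, 0 < n i) (ρ : Perm ι)
    (x : (i : ι) × Fin (n i)) (hx : x.2.val ≠ n x.1 - 1) :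
    ((blockRotate n)⁻¹ * ρ.extendDomain (zeroSection n hn) * blockRotate n) x = x := by
  have h2 := x.2.isLt
  have hlt : x.2.val + 1 < n x.1 := by omega
  have h1 : ((blockRotate n) x).2.val ≠ 0 := by
    rw [blockRotate_apply]
    show (finRotate (n x.1) x.2).val ≠ 0
    rw [finRotate_val, Nat.mod_eq_of_lt hlt]
    omega
  rw [Perm.mul_apply, Perm.mul_apply, Perm.extendDomain_apply_not_subtype ρ (zeroSection n hn) h1,
    ← Perm.mul_apply, inv_mul_cancel, Perm.one_apply]

end Helpers

/-- if `σ⁻¹π_{\vec n}` separates `N` (the set of last elements of the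
blocks `T i`), then the first-return restrictions of `σ⁻¹γ_{p,q,l}` and
`π_{\vec n}⁻¹γ_{p,q,l}` to `N` coincide; consequently `σ⁻¹γ_{p,q,l}` separates `N`
iff `π = γ_{r,s,t}`. Here `γ_{p,q,l} = mergePerm n hn (blockRotate ![r,s,t])`. -/
theorem stmt16 (r s t : ℕ) (n : ((i : Fin 3) × Fin (![r, s, t] i)) → ℕ)
    (hn : ∀ x, 0 < n x)
    (N : Set ((x : (i : Fin 3) × Fin (![r, s, t] i)) × Fin (n x)))
    (hN : N = {y | y.2.val = n y.1 - 1})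
    (π : Equiv.Perm ((i : Fin 3) × Fin (![r, s, t] i)))
    (σ : Equiv.Perm ((x : (i : Fin 3) × Fin (![r, s, t] i)) × Fin (n x)))
    (hsep : Separates (σ⁻¹ * mergePerm n hn π) N) :
    restrictPerm (σ⁻¹ * mergePerm n hn (blockRotate ![r, s, t])) (· ∈ N) =
      restrictPerm ((mergePerm n hn π)⁻¹ * mergePerm n hn (blockRotate ![r, s, t]))
        (· ∈ N) ∧
    (Separates (σ⁻¹ * mergePerm n hn (blockRotate ![r, s, t])) N ↔
      π = blockRotate ![r, s, t]) := by
  subst hN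
  set g := blockRotate ![r, s, t] with hg
  set b := (mergePerm n hn π)⁻¹ * mergePerm n hn g with hb
  set S : Set ((x : (i : Fin 3) × Fin (![r, s, t] i)) × Fin (n x)) :=
    {y | y.2.val = n y.1 - 1} with hS
  have hdecomp : b = (blockRotate n)⁻¹ *
      (π⁻¹ * g).extendDomain (zeroSection n hn) * blockRotate n := by
    rw [hb, mergePerm, mergePerm, mul_inv_rev, Perm.extendDomain_inv, mul_assoc,
      ← mul_assoc ((π⁻¹).extendDomain (zeroSection n hn)), Perm.extendDomain_mul, ← mul_assoc]
  have hbN : ∀ x ∈ S, b x ∈ S := by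
    intro x hx
    rw [hdecomp, conj_apply_mem n hn _ x hx]
    exact rfl
  have hbc : ∀ x ∉ S, b x = x := by
    intro x hx
    rw [hdecomp]
    exact conj_apply_not_mem n hn _ x hx
  have hab : σ⁻¹ * mergePerm n hn g = (σ⁻¹ * mergePerm n hn π) * b := by
    rw [hb]; group
  have hpf : ∀ x, b x ∈ S ↔ x ∈ S := fun x => Iff.symm
    ⟨fun h => hbN x h, fun h => by by_contra hn'; rw [hbc x hn'] at h; exact hn' h⟩
  have h1 : restrictPerm (σ⁻¹ * mergePerm n hn g) (· ∈ S) = b.subtypePerm hpf := by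
    rw [hab]; exact restrictPerm_mul hsep hbN hbc
  have hsep1 : Separates (1 : Perm ((x : (i : Fin 3) × Fin (![r, s, t] i)) × Fin (n x))) S := fun x _ y _ h => Perm.sameCycle_one.mp h
  have h2 : restrictPerm b (· ∈ S) = b.subtypePerm hpf := by
    have h3 := restrictPerm_mul hsep1 hbN hbc
    rwa [one_mul] at h3
  refine ⟨h1.trans h2.symm, ?_, ?_⟩
  · intro hSep
    have hone : b.subtypePerm hpf = 1 :=
      h1.symm.trans (restrictPerm_eq_one_of_separates hSep)
    have hfix : ∀ x, ∀ hx : x ∈ S, b x = x := by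
      intro x hx
      have h3 : b.subtypePerm hpf ⟨x, hx⟩ = (1 : Perm {y // y ∈ S}) ⟨x, hx⟩ := by rw [hone]
      exact congrArg Subtype.val h3
    have hρ : ∀ i, (π⁻¹ * g) i = i := by
      intro i
      have hx : (⟨i, ⟨n i - 1, Nat.sub_lt (hn i) one_pos⟩⟩ :
          (x : (i : Fin 3) × Fin (![r, s, t] i)) × Fin (n x)) ∈ S := rfl
      have h4 := hfix _ hx
      rw [hdecomp, conj_apply_mem n hn _ _ hx] at h4
      exact congrArg Sigma.fst h4
    have hρ1 : π⁻¹ * g = 1 := Equiv.ext hρ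
    exact inv_mul_eq_one.mp hρ1
  · intro h
    rw [← h]
    exact hsep


end ThirdOrderFree
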